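/- arXiv:2601.02108 — 2 statements merged into one kernel-verified Lean document; each statement's English description precedes it below -/
import Mathlib

section
/- Energy decrease of the corrector step: Let H be an n×n real symmetric negative semidefinite matrix (H ≤ 0 in the Loewner order), Û an n×N real matrix with Ûᵀ·Û ≤ I_N, and s ≥ 0. Set U' = Û − s·H·Û·(I_N − Ûᵀ·Û). Then E(U') ≤ E(Û). -/
open Matrix

noncomputable section

/-- Loewner order: X ≤ Y iff Y − X is positive semidefinite. -/
def loewnerLE {k : ℕ} (X Y : Matrix (Fin k) (Fin k) ℝ) : Prop :=
  (Y - X).PosSemidef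

/-- The energy E(W) = (1/2)·tr(Wᵀ·H·W). -/
def energy {n N : ℕ} (H : Matrix (Fin n) (Fin n) ℝ) (W : Matrix (Fin n) (Fin N) ℝ) : ℝ :=
  (1 / 2 : ℝ) * Matrix.trace (Wᵀ * H * W)

lemma psd_trace_nonneg {k : ℕ} {M : Matrix (Fin k) (Fin k) ℝ} (hM : M.PosSemidef) :
    0 ≤ M.trace := by
  rw [Matrix.trace]
  apply Finset.sum_nonneg
  intro i _
  exact hM.diag_nonneg

open scoped MatrixOrder in
lemma psd_trace_mul_nonneg {k : ℕ} {P M : Matrix (Fin k) (Fin k) ℝ}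
    (hP : P.PosSemidef) (hM : M.PosSemidef) : 0 ≤ (P * M).trace := by
  have h1 : P = CFC.sqrt P * CFC.sqrt P := (CFC.sqrt_mul_sqrt_self P hP.nonneg).symm
  have hS : (CFC.sqrt P).IsHermitian := (CFC.sqrt_nonneg P).posSemidef.1
  have h2 : (P * M).trace = (CFC.sqrt P * M * CFC.sqrt P).trace := by
    conv_lhs => rw [h1, Matrix.mul_assoc]
    rw [Matrix.trace_mul_comm, Matrix.mul_assoc]
  rw [h2]
  apply psd_trace_nonneg
  have hps := hM.mul_mul_conjTranspose_same (CFC.sqrt P)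
  rwa [hS.eq] at hps

/-- Energy decrease of the corrector step. -/
theorem corrector_energy_decrease
    {n N : ℕ} (H : Matrix (Fin n) (Fin n) ℝ) (hH : H.IsSymm)
    (hHneg : loewnerLE H 0)
    (Uhat : Matrix (Fin n) (Fin N) ℝ)
    (hUhat : loewnerLE (Uhatᵀ * Uhat) 1)
    (s : ℝ) (hs : 0 ≤ s)
    (U' : Matrix (Fin n) (Fin N) ℝ)
    (hcorr : U' = Uhat - s • (H * Uhat * (1 - Uhatᵀ * Uhat))) :
    energy H U' ≤ energy H Uhat := by
  set A : Matrix (Fin n) (Fin N) ℝ := H * Uhat with hA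
  set P : Matrix (Fin N) (Fin N) ℝ := 1 - Uhatᵀ * Uhat with hP
  have hPpsd : P.PosSemidef := hUhat
  have hHpsd : (-H).PosSemidef := by simpa [loewnerLE] using hHneg
  set D : Matrix (Fin n) (Fin N) ℝ := A * P with hD
  have hHt : Hᵀ = H := hH
  have hPt : Pᵀ = P := hPpsd.1
  -- tr(DᵀHÛ) = tr(P * (AᵀA))
  have key1 : (Dᵀ * H * Uhat).trace = (P * (Aᵀ * A)).trace := by
    congr 1
    simp only [hD, Matrix.transpose_mul, hPt, Matrix.mul_assoc, hA]
  -- tr(ÛᵀHD) = tr(DᵀHÛ) by transpose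
  have key2 : (Uhatᵀ * H * D).trace = (Dᵀ * H * Uhat).trace := by
    rw [← Matrix.trace_transpose (Uhatᵀ * H * D)]
    congr 1
    simp only [Matrix.transpose_mul, Matrix.transpose_transpose, hHt, Matrix.mul_assoc]
  have h1 : 0 ≤ (P * (Aᵀ * A)).trace := by
    apply psd_trace_mul_nonneg hPpsd
    have := Matrix.posSemidef_conjTranspose_mul_self A
    simpa using this
  have h3 : (Dᵀ * H * D).trace ≤ 0 := by
    have hpsd : (Dᴴ * (-H) * D).PosSemidef := hHpsd.conjTranspose_mul_mul_same D
    have := psd_trace_nonneg hpsd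
    have heq : (Dᴴ * (-H) * D) = -(Dᵀ * H * D) := by
      rw [Matrix.conjTranspose_eq_transpose_of_trivial, Matrix.mul_neg, Matrix.neg_mul]
    rw [heq] at this
    simpa using this
  -- expand energy
  have hexp : energy H U' = energy H Uhat - s * (P * (Aᵀ * A)).trace
      + (1/2) * s^2 * (Dᵀ * H * D).trace := by
    have hU' : U' = Uhat - s • D := by rw [hcorr, hD, hA, hP]
    rw [energy, energy, hU']
    have expand : (Uhat - s • D)ᵀ * H * (Uhat - s • D)
        = Uhatᵀ * H * Uhat - s • (Dᵀ * H * Uhat) - s • (Uhatᵀ * H * D)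
          + (s * s) • (Dᵀ * H * D) := by
      rw [Matrix.transpose_sub, Matrix.transpose_smul]
      rw [Matrix.sub_mul, Matrix.sub_mul, Matrix.mul_sub, Matrix.mul_sub]
      simp only [Matrix.smul_mul, Matrix.mul_smul, smul_smul]
      abel
    rw [expand]
    simp only [Matrix.trace_add, Matrix.trace_sub, Matrix.trace_smul, smul_eq_mul]
    rw [key1, key2, key1]
    ring
  rw [hexp]
  have t1 : s * (P * (Aᵀ * A)).trace ≥ 0 := mul_nonneg hs h1
  have t2 : (1/2) * s^2 * (Dᵀ * H * D).trace ≤ 0 :=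
    mul_nonpos_of_nonneg_of_nonpos (by positivity) h3
  linarith
end
end

section
/- Corrector residual bound (from the proof of Lemma 4.6): Let H be an n×n real symmetric matrix with σ_max(H) ≤ M. Let U, Û, V be n×N real matrices with Ûᵀ·Û = Uᵀ·U, Vᵀ·V = I_N, and σ_max(U) ≤ α. Then ‖H·Û·(I_N − Ûᵀ·Û)‖_F ≤ M·α·(α + 1)·‖U − V‖_F. -/
open Matrix

noncomputable section

/-- Frobenius norm of a real matrix. -/
def frobNorm {m k : ℕ} (A : Matrix (Fin m) (Fin k) ℝ) : ℝ :=
  Real.sqrt (∑ i, ∑ j, (A i j) ^ 2)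

/-- Largest singular value (ℓ²-operator norm) of a real matrix. -/
def sigmaMax {m k : ℕ} (A : Matrix (Fin m) (Fin k) ℝ) : ℝ :=
  ‖LinearMap.toContinuousLinearMap (Matrix.toEuclideanLin A)‖

open scoped Matrix.Norms.L2Operator

lemma sigmaMax_eq_norm {m k : ℕ} (A : Matrix (Fin m) (Fin k) ℝ) : sigmaMax A = ‖A‖ := rfl

lemma frobNorm_nonneg {m k : ℕ} (A : Matrix (Fin m) (Fin k) ℝ) : 0 ≤ frobNorm A :=
  Real.sqrt_nonneg _

lemma frobNorm_sq {m k : ℕ} (A : Matrix (Fin m) (Fin k) ℝ) :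
    frobNorm A ^ 2 = ∑ i, ∑ j, (A i j) ^ 2 := by
  refine Real.sq_sqrt ?_
  positivity

lemma frobNorm_eq_norm {m k : ℕ} (A : Matrix (Fin m) (Fin k) ℝ) :
    frobNorm A =
      ‖((WithLp.equiv 2 (Fin m × Fin k → ℝ)).symm (fun p => A p.1 p.2) :
        EuclideanSpace ℝ (Fin m × Fin k))‖ := by
  rw [EuclideanSpace.norm_eq, frobNorm]
  congr 1
  rw [Fintype.sum_prod_type]
  simp [Real.norm_eq_abs, sq_abs]

lemma frobNorm_add_le {m k : ℕ} (A B : Matrix (Fin m) (Fin k) ℝ) :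
    frobNorm (A + B) ≤ frobNorm A + frobNorm B := by
  rw [frobNorm_eq_norm, frobNorm_eq_norm, frobNorm_eq_norm]
  exact norm_add_le ((WithLp.equiv 2 (Fin m × Fin k → ℝ)).symm (fun p => A p.1 p.2) :
    EuclideanSpace ℝ (Fin m × Fin k)) ((WithLp.equiv 2 (Fin m × Fin k → ℝ)).symm
    (fun p => B p.1 p.2) : EuclideanSpace ℝ (Fin m × Fin k))

lemma frobNorm_transpose {m k : ℕ} (A : Matrix (Fin m) (Fin k) ℝ) :
    frobNorm Aᵀ = frobNorm A := by
  rw [frobNorm, frobNorm, Finset.sum_comm]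
  rfl

lemma frobNorm_neg {m k : ℕ} (A : Matrix (Fin m) (Fin k) ℝ) :
    frobNorm (-A) = frobNorm A := by
  simp [frobNorm, neg_sq]

/-- Mixed bound: Frobenius norm of a product by operator norm times Frobenius norm. -/
lemma frob_mul_le {m l k : ℕ} (A : Matrix (Fin m) (Fin l) ℝ) (B : Matrix (Fin l) (Fin k) ℝ) :
    frobNorm (A * B) ≤ sigmaMax A * frobNorm B := by
  have hcol : ∀ j, ∑ i, ((A * B) i j) ^ 2 ≤
      (sigmaMax A)^2 * ∑ i, (B i j) ^ 2 := by
    intro j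
    set x : EuclideanSpace ℝ (Fin l) := (WithLp.equiv 2 _).symm (fun i => B i j) with hx
    have h1 : ‖((EuclideanSpace.equiv (Fin m) ℝ).symm <| A *ᵥ x : EuclideanSpace ℝ (Fin m))‖
        ≤ ‖A‖ * ‖x‖ := Matrix.l2_opNorm_mulVec A x
    have h2 : ‖((EuclideanSpace.equiv (Fin m) ℝ).symm <| A *ᵥ x : EuclideanSpace ℝ (Fin m))‖^2
        ≤ (‖A‖ * ‖x‖)^2 := by
      apply pow_le_pow_left₀ (norm_nonneg _) h1
    have e1 : ‖((EuclideanSpace.equiv (Fin m) ℝ).symm <| A *ᵥ x : EuclideanSpace ℝ (Fin m))‖^2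
        = ∑ i, ((A * B) i j) ^ 2 := by
      rw [EuclideanSpace.norm_eq, Real.sq_sqrt (by positivity)]
      refine Finset.sum_congr rfl fun i _ => ?_
      rw [Real.norm_eq_abs, sq_abs]
      congr 1
    have e2 : ‖x‖^2 = ∑ i, (B i j) ^ 2 := by
      rw [EuclideanSpace.norm_eq, Real.sq_sqrt (by positivity)]
      refine Finset.sum_congr rfl fun i _ => ?_
      rw [Real.norm_eq_abs, sq_abs]
      rfl
    calc ∑ i, ((A * B) i j) ^ 2 = _ := e1.symm
      _ ≤ (‖A‖ * ‖x‖)^2 := h2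
      _ = (sigmaMax A)^2 * ∑ i, (B i j)^2 := by
          rw [mul_pow, e2, sigmaMax_eq_norm]
  have hsum : frobNorm (A * B) ^ 2 ≤ (sigmaMax A)^2 * frobNorm B ^ 2 := by
    rw [frobNorm_sq, frobNorm_sq]
    calc (∑ i, ∑ j, ((A * B) i j)^2) = ∑ j, ∑ i, ((A * B) i j)^2 := Finset.sum_comm
      _ ≤ ∑ j, (sigmaMax A)^2 * ∑ i, (B i j)^2 := Finset.sum_le_sum fun j _ => hcol j
      _ = (sigmaMax A)^2 * ∑ j, ∑ i, (B i j)^2 := (Finset.mul_sum _ _ _).symm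
      _ = (sigmaMax A)^2 * ∑ i, ∑ j, (B i j)^2 := by rw [Finset.sum_comm]
  have hσ : 0 ≤ sigmaMax A := by rw [sigmaMax_eq_norm]; exact norm_nonneg _
  nlinarith [hsum, frobNorm_nonneg (A * B), frobNorm_nonneg B,
    mul_nonneg hσ (frobNorm_nonneg B)]

/-- Corrector residual bound (from the proof of Lemma 4.6). -/
theorem corrector_residual_bound
    {n N : ℕ} (H : Matrix (Fin n) (Fin n) ℝ) (hH : H.IsSymm)
    (M α : ℝ) (hM : sigmaMax H ≤ M)
    (U Uhat V : Matrix (Fin n) (Fin N) ℝ)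
    (hgram : Uhatᵀ * Uhat = Uᵀ * U)
    (hV : Vᵀ * V = 1)
    (hU : sigmaMax U ≤ α) :
    frobNorm (H * Uhat * (1 - Uhatᵀ * Uhat)) ≤ M * α * (α + 1) * frobNorm (U - V) := by
  -- translate sigmaMax to the scoped L2 operator norm
  rw [sigmaMax_eq_norm] at hM hU
  have hM0 : 0 ≤ M := le_trans (norm_nonneg _) hM
  have hα0 : 0 ≤ α := le_trans (norm_nonneg _) hU
  -- conjTranspose = transpose over ℝ
  have ct : ∀ {p q : ℕ} (A : Matrix (Fin p) (Fin q) ℝ), Aᴴ = Aᵀ := fun A =>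
    Matrix.conjTranspose_eq_transpose_of_trivial A
  -- ‖Uhat‖ = ‖U‖ ≤ α
  have hUhat : ‖Uhat‖ ≤ α := by
    have h1 : ‖Uhat‖ * ‖Uhat‖ = ‖U‖ * ‖U‖ := by
      rw [← Matrix.l2_opNorm_conjTranspose_mul_self Uhat,
        ← Matrix.l2_opNorm_conjTranspose_mul_self U, ct, ct, hgram]
    have h2 : ‖Uhat‖ = ‖U‖ := by
      have := congrArg Real.sqrt h1
      rwa [Real.sqrt_mul_self (norm_nonneg _), Real.sqrt_mul_self (norm_nonneg _)] at this
    rw [h2]; exact hU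
  -- ‖Vᵀ‖ ≤ 1
  have hone : ‖(1 : Matrix (Fin N) (Fin N) ℝ)‖ ≤ 1 := by
    have h1 : (1 : Matrix (Fin N) (Fin N) ℝ) =
        Matrix.toEuclideanCLM (𝕜 := ℝ).symm 1 := by simp
    rw [h1]
    have h2 : ‖(Matrix.toEuclideanCLM (𝕜 := ℝ)
        ((Matrix.toEuclideanCLM (𝕜 := ℝ)).symm
          (1 : EuclideanSpace ℝ (Fin N) →L[ℝ] EuclideanSpace ℝ (Fin N))))‖ ≤ 1 := by
      rw [StarAlgEquiv.apply_symm_apply]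
      exact ContinuousLinearMap.norm_id_le
    exact h2
  have hVt : ‖Vᵀ‖ ≤ 1 := by
    rw [← ct, Matrix.l2_opNorm_conjTranspose]
    have h1 : ‖V‖ * ‖V‖ ≤ 1 := by
      rw [← Matrix.l2_opNorm_conjTranspose_mul_self V, ct, hV]; exact hone
    nlinarith [norm_nonneg V]
  have hUt : ‖Uᵀ‖ ≤ α := by rw [← ct, Matrix.l2_opNorm_conjTranspose]; exact hU
  -- the key decomposition of 1 - Uhatᵀ * Uhat
  have hdecomp : (1 : Matrix (Fin N) (Fin N) ℝ) - Uhatᵀ * Uhat =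
      Vᵀ * (V - U) + (V - U)ᵀ * U := by
    rw [hgram, ← hV, Matrix.transpose_sub, Matrix.mul_sub, Matrix.sub_mul]
    abel
  -- frobenius norm bound on 1 - Uhatᵀ * Uhat
  have hfrobVU : frobNorm (V - U) = frobNorm (U - V) := by
    rw [← neg_sub U V, frobNorm_neg]
  have hres : frobNorm ((1 : Matrix (Fin N) (Fin N) ℝ) - Uhatᵀ * Uhat)
      ≤ (α + 1) * frobNorm (U - V) := by
    rw [hdecomp]
    have t1 : frobNorm (Vᵀ * (V - U)) ≤ 1 * frobNorm (U - V) := by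
      calc frobNorm (Vᵀ * (V - U)) ≤ sigmaMax Vᵀ * frobNorm (V - U) := frob_mul_le _ _
        _ ≤ 1 * frobNorm (U - V) := by
            rw [hfrobVU, sigmaMax_eq_norm]
            exact mul_le_mul_of_nonneg_right hVt (frobNorm_nonneg _)
    have t2 : frobNorm ((V - U)ᵀ * U) ≤ α * frobNorm (U - V) := by
      have e : frobNorm ((V - U)ᵀ * U) = frobNorm (Uᵀ * (V - U)) := by
        rw [← frobNorm_transpose (Uᵀ * (V - U)), Matrix.transpose_mul, Matrix.transpose_transpose]
      rw [e]
      calc frobNorm (Uᵀ * (V - U)) ≤ sigmaMax Uᵀ * frobNorm (V - U) := frob_mul_le _ _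
        _ ≤ α * frobNorm (U - V) := by
            rw [hfrobVU, sigmaMax_eq_norm]
            exact mul_le_mul_of_nonneg_right hUt (frobNorm_nonneg _)
    calc frobNorm (Vᵀ * (V - U) + (V - U)ᵀ * U)
        ≤ frobNorm (Vᵀ * (V - U)) + frobNorm ((V - U)ᵀ * U) := frobNorm_add_le _ _
      _ ≤ 1 * frobNorm (U - V) + α * frobNorm (U - V) := add_le_add t1 t2
      _ = (α + 1) * frobNorm (U - V) := by ring
  -- operator norm bound on H * Uhat
  have hHU : sigmaMax (H * Uhat) ≤ M * α := by
    rw [sigmaMax_eq_norm]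
    calc ‖H * Uhat‖ ≤ ‖H‖ * ‖Uhat‖ := Matrix.l2_opNorm_mul _ _
      _ ≤ M * α := mul_le_mul hM hUhat (norm_nonneg _) hM0
  -- put everything together
  calc frobNorm (H * Uhat * (1 - Uhatᵀ * Uhat))
      ≤ sigmaMax (H * Uhat) * frobNorm (1 - Uhatᵀ * Uhat) := frob_mul_le _ _
    _ ≤ (M * α) * ((α + 1) * frobNorm (U - V)) := by
        apply mul_le_mul hHU hres (frobNorm_nonneg _)
        exact mul_nonneg hM0 hα0
    _ = M * α * (α + 1) * frobNorm (U - V) := by ring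
end
end
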